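/- In the generalized linear model setting, suppose the exponential moment condition (expζᵢ) holds: for some λ*₁ > 0 and values 𝔫ᵢ > 0, log E exp{ 2λ (Yᵢ − bᵢ)/𝔫ᵢ } ≤ 2λ² for all |λ| ≤ λ*₁ and all i ≤ n. Then: (a) if for some μ > 0 one has μ |Ψᵢᵀ(θ−θ₀)| 𝔫ᵢ ≤ λ*₁ for all i and all θ ∈ Θ, then the rate function M(θ,θ₀) = −log E exp{𝓛(θ) − 𝓛(θ₀)} is finite for all θ ∈ Θ; (b) if λ is such that |λ cᵢ(γ)| ≤ λ*₁ for all i and all unit vectors γ, where cᵢ(γ) = γᵀΨᵢ 𝔫ᵢ (γᵀV₁γ)^{−1/2}, then log E exp{ 2λ γᵀ∇ζ / √(γᵀVγ) } ≤ 2λ² for all unit γ, where ζ = 𝓛(θ) − E 𝓛(θ) so that ∇ζ = μ Σᵢ (Yᵢ − bᵢ)Ψᵢ, V₁ = Σᵢ 𝔫ᵢ² ΨᵢΨᵢᵀ and V = μ²V₁. -/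

import Mathlib

set_option autoImplicit false

open MeasureTheory Matrix Set
open scoped ENNReal

noncomputable section

/-- Quadratic form `xᵀ V x` on `ℝ^p`. -/
def qf {p : ℕ} (V : Matrix (Fin p) (Fin p) ℝ) (x : Fin p → ℝ) : ℝ := x ⬝ᵥ V.mulVec x

/-- The quasi log-likelihood of the generalized linear model:
`𝓛(θ) = μ Σᵢ {Yᵢ Ψᵢᵀθ − d(Ψᵢᵀθ)}`. -/
def glmL {Ω : Type*} {n p : ℕ} (Y : Fin n → Ω → ℝ) (Ψ : Fin n → Fin p → ℝ)
    (d : ℝ → ℝ) (μ : ℝ) (θ : Fin p → ℝ) (ω : Ω) : ℝ :=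
  μ * ∑ i, (Y i ω * (Ψ i ⬝ᵥ θ) - d (Ψ i ⬝ᵥ θ))

lemma qf_eq {p : ℕ} (M : Matrix (Fin p) (Fin p) ℝ) (γ : Fin p → ℝ) :
    qf M γ = ∑ k, ∑ l, γ k * M k l * γ l := by
  simp [qf, dotProduct, mulVec, Finset.mul_sum, mul_assoc]

lemma qf_sum {n p : ℕ} (𝔫 : Fin n → ℝ) (Ψ : Fin n → Fin p → ℝ) (γ : Fin p → ℝ) :
    qf (∑ j, (𝔫 j) ^ 2 • vecMulVec (Ψ j) (Ψ j)) γ = ∑ j, (𝔫 j) ^ 2 * (γ ⬝ᵥ Ψ j) ^ 2 := by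
  rw [qf_eq]
  calc ∑ k, ∑ l, γ k * (∑ j, (𝔫 j) ^ 2 • vecMulVec (Ψ j) (Ψ j)) k l * γ l
      = ∑ k, ∑ j, ∑ l, γ k * ((𝔫 j) ^ 2 * (Ψ j k * Ψ j l)) * γ l := by
        refine Finset.sum_congr rfl fun k _ => ?_
        rw [Finset.sum_comm]
        refine Finset.sum_congr rfl fun l _ => ?_
        simp [Matrix.sum_apply, vecMulVec_apply, Finset.sum_mul, Finset.mul_sum]
    _ = ∑ j, ∑ k, ∑ l, γ k * ((𝔫 j) ^ 2 * (Ψ j k * Ψ j l)) * γ l := Finset.sum_comm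
    _ = ∑ j, (𝔫 j) ^ 2 * (γ ⬝ᵥ Ψ j) ^ 2 := by
        refine Finset.sum_congr rfl fun j _ => ?_
        simp only [dotProduct, pow_two, Finset.mul_sum, Finset.sum_mul]
        refine Finset.sum_congr rfl fun k _ => ?_
        exact Finset.sum_congr rfl fun l _ => by ring

lemma qf_smul {p : ℕ} (μ : ℝ) (V : Matrix (Fin p) (Fin p) ℝ) (γ : Fin p → ℝ) :
    qf (μ ^ 2 • V) γ = μ ^ 2 * qf V γ := by
  simp [qf, smul_mulVec, dotProduct_smul]

lemma aux_exp {Ω : Type*} [MeasurableSpace Ω] (P : Measure Ω) [IsProbabilityMeasure P]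
    (X : Ω → ℝ) (hX : Measurable X) (m : ℝ) (hm : 0 < m) (lam₁ : ℝ)
    (hexp : ∀ lam : ℝ, |lam| ≤ lam₁ →
      ∫⁻ ω, ENNReal.ofReal (Real.exp (2 * lam * X ω / m)) ∂P
        ≤ ENNReal.ofReal (Real.exp (2 * lam ^ 2)))
    (c : ℝ) (hc : |c| * m ≤ 2 * lam₁) :
    Integrable (fun ω => Real.exp (c * X ω)) P ∧
      ∫ ω, Real.exp (c * X ω) ∂P ≤ Real.exp (c ^ 2 * m ^ 2 / 2) := by
  set lam := c * m / 2 with hlamdef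
  have hlam : |lam| ≤ lam₁ := by
    rw [hlamdef, abs_div, abs_mul, abs_of_pos hm]
    rw [abs_of_pos (by norm_num : (0:ℝ) < 2)]
    linarith
  have hfun : ∀ ω, 2 * lam * X ω / m = c * X ω := by
    intro ω
    field_simp [hlamdef]
    ring
  have hlin : ∫⁻ ω, ENNReal.ofReal (Real.exp (c * X ω)) ∂P
      ≤ ENNReal.ofReal (Real.exp (c ^ 2 * m ^ 2 / 2)) := by
    have h := hexp lam hlam
    simp only [hfun] at h
    have : 2 * lam ^ 2 = c ^ 2 * m ^ 2 / 2 := by rw [hlamdef]; ring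
    rwa [this] at h
  have hnn : 0 ≤ᵐ[P] fun ω => Real.exp (c * X ω) :=
    Filter.Eventually.of_forall fun ω => (Real.exp_pos _).le
  have hmeas : Measurable fun ω => Real.exp (c * X ω) := (hX.const_mul c).exp
  have hint : Integrable (fun ω => Real.exp (c * X ω)) P := by
    refine ⟨hmeas.aestronglyMeasurable, ?_⟩
    rw [hasFiniteIntegral_iff_ofReal hnn]
    exact lt_of_le_of_lt hlin ENNReal.ofReal_lt_top
  refine ⟨hint, ?_⟩
  rw [integral_eq_lintegral_of_nonneg_ae hnn hmeas.aestronglyMeasurable]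
  calc (∫⁻ ω, ENNReal.ofReal (Real.exp (c * X ω)) ∂P).toReal
      ≤ (ENNReal.ofReal (Real.exp (c ^ 2 * m ^ 2 / 2))).toReal :=
        ENNReal.toReal_mono ENNReal.ofReal_ne_top hlin
    _ = Real.exp (c ^ 2 * m ^ 2 / 2) := ENNReal.toReal_ofReal (Real.exp_pos _).le

/-- Lemma 3.1: conditions `(E)` and `(ED)` in the generalized
linear model. -/
theorem statement8
    {Ω : Type*} [MeasurableSpace Ω] (P : Measure Ω) [IsProbabilityMeasure P]
    {n p : ℕ} (Y : Fin n → Ω → ℝ) (hYmeas : ∀ i, Measurable (Y i))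
    (hYindep : ProbabilityTheory.iIndepFun Y P)
    (hYint : ∀ i, Integrable (Y i) P)
    (b : Fin n → ℝ) (hb : ∀ i, b i = ∫ ω, Y i ω ∂P)
    (Ψ : Fin n → Fin p → ℝ)
    (d : ℝ → ℝ) (hd : ConvexOn ℝ univ d)
    (Θ : Set (Fin p → ℝ)) (θ₀ : Fin p → ℝ) (hθ₀ : θ₀ ∈ Θ)
    (μ : ℝ) (hμ : 0 < μ)
    (hmax : ∀ θ ∈ Θ, ∫ ω, glmL Y Ψ d μ θ ω ∂P ≤ ∫ ω, glmL Y Ψ d μ θ₀ ω ∂P)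
    -- the exponential moment condition (expζᵢ)
    (lam₁ : ℝ) (hlam₁ : 0 < lam₁)
    (𝔫 : Fin n → ℝ) (h𝔫 : ∀ i, 0 < 𝔫 i)
    (hexp : ∀ i, ∀ lam : ℝ, |lam| ≤ lam₁ →
      ∫⁻ ω, ENNReal.ofReal (Real.exp (2 * lam * (Y i ω - b i) / 𝔫 i)) ∂P
        ≤ ENNReal.ofReal (Real.exp (2 * lam ^ 2))) :
    -- (a): condition (E) holds
    ((∀ θ ∈ Θ, ∀ i, μ * |Ψ i ⬝ᵥ (θ - θ₀)| * 𝔫 i ≤ lam₁) →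
      ∀ θ ∈ Θ, Integrable (fun ω => Real.exp (glmL Y Ψ d μ θ ω - glmL Y Ψ d μ θ₀ ω)) P)
    -- (b): condition (ED) holds with `V(⋅) ≡ V = μ² V₁`
    ∧ (∀ lam : ℝ,
        (∀ i, ∀ γ : Fin p → ℝ, γ ⬝ᵥ γ = 1 →
          |lam * ((γ ⬝ᵥ Ψ i) * 𝔫 i /
            Real.sqrt (qf (∑ j, (𝔫 j) ^ 2 • vecMulVec (Ψ j) (Ψ j)) γ))| ≤ lam₁) →
        ∀ γ : Fin p → ℝ, γ ⬝ᵥ γ = 1 →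
          ∫⁻ ω, ENNReal.ofReal (Real.exp (2 * lam *
              (μ * ∑ i, (Y i ω - b i) * (γ ⬝ᵥ Ψ i)) /
              Real.sqrt (qf (μ ^ 2 • ∑ j, (𝔫 j) ^ 2 • vecMulVec (Ψ j) (Ψ j)) γ))) ∂P
            ≤ ENNReal.ofReal (Real.exp (2 * lam ^ 2))) := by
  constructor
  · -- part (a)
    intro hcond θ hθ
    set c : Fin n → ℝ := fun i => μ * (Ψ i ⬝ᵥ (θ - θ₀)) with hcdef
    set Z : Fin n → Ω → ℝ := fun i => (fun x => c i * (x - b i)) ∘ Y i with hZdef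
    have hZmeas : ∀ i, Measurable (Z i) := fun i =>
      ((measurable_id.sub_const (b i)).const_mul (c i)).comp (hYmeas i)
    have hZindep : ProbabilityTheory.iIndepFun Z P :=
      hYindep.comp (fun i => fun x => c i * (x - b i))
        (fun i => (measurable_id.sub_const (b i)).const_mul (c i))
    have hZint : ∀ i, Integrable (fun ω => Real.exp (1 * Z i ω)) P := by
      intro i
      have hci : |c i| * 𝔫 i ≤ 2 * lam₁ := by
        have h1 := hcond θ hθ i
        have : |c i| = μ * |Ψ i ⬝ᵥ (θ - θ₀)| := by
          rw [hcdef, abs_mul, abs_of_pos hμ]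
        rw [this]
        linarith
      have := (aux_exp P (fun ω => Y i ω - b i) ((hYmeas i).sub_const (b i))
        (𝔫 i) (h𝔫 i) lam₁ (hexp i) (c i) hci).1
      simpa [hZdef, one_mul] using this
    have hsum : Integrable (fun ω => Real.exp (1 * (∑ i, Z i) ω)) P :=
      ProbabilityTheory.iIndepFun.integrable_exp_mul_sum hZindep hZmeas
        (fun i _ => hZint i)
    set C : ℝ := ∑ i, (c i * b i - μ * (d (Ψ i ⬝ᵥ θ) - d (Ψ i ⬝ᵥ θ₀))) with hCdef
    have key : ∀ ω, glmL Y Ψ d μ θ ω - glmL Y Ψ d μ θ₀ ω = (∑ i, Z i) ω + C := by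
      intro ω
      simp only [glmL, hZdef, hCdef, hcdef, Finset.sum_apply, Function.comp_apply,
        Finset.mul_sum]
      rw [← Finset.sum_add_distrib, ← Finset.sum_sub_distrib]
      refine Finset.sum_congr rfl fun i _ => ?_
      rw [dotProduct_sub]
      ring
    have heq : (fun ω => Real.exp (glmL Y Ψ d μ θ ω - glmL Y Ψ d μ θ₀ ω))
        = fun ω => Real.exp (1 * (∑ i, Z i) ω) * Real.exp C := by
      funext ω
      rw [key ω, one_mul, Real.exp_add]
    rw [heq]
    exact hsum.mul_const _
  · -- part (b)
    intro lam hcb γ hγ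
    have hq1 := qf_sum 𝔫 Ψ γ
    set q : ℝ := qf (∑ j, (𝔫 j) ^ 2 • vecMulVec (Ψ j) (Ψ j)) γ with hqdef
    have hqnn : 0 ≤ q := by rw [hq1]; positivity
    have hden : Real.sqrt (qf (μ ^ 2 • ∑ j, (𝔫 j) ^ 2 • vecMulVec (Ψ j) (Ψ j)) γ)
        = μ * Real.sqrt q := by
      rw [qf_smul, Real.sqrt_mul (sq_nonneg μ) q, Real.sqrt_sq hμ.le]
    by_cases hq : q = 0
    · -- degenerate case: the denominator vanishes and the exponent is 0
      have : ∀ ω : Ω, (2 * lam * (μ * ∑ i, (Y i ω - b i) * (γ ⬝ᵥ Ψ i)) /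
          Real.sqrt (qf (μ ^ 2 • ∑ j, (𝔫 j) ^ 2 • vecMulVec (Ψ j) (Ψ j)) γ)) = 0 := by
        intro ω
        rw [hden, hq, Real.sqrt_zero, mul_zero, div_zero]
      simp only [this, Real.exp_zero, ENNReal.ofReal_one, lintegral_const, one_mul,
        measure_univ]
      exact ENNReal.one_le_ofReal.mpr (Real.one_le_exp (by positivity))
    · have hqpos : 0 < q := lt_of_le_of_ne hqnn (Ne.symm hq)
      have hsqpos : 0 < Real.sqrt q := Real.sqrt_pos.mpr hqpos
      set c : Fin n → ℝ := fun i => 2 * lam * (γ ⬝ᵥ Ψ i) / Real.sqrt q with hcdef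
      set Z : Fin n → Ω → ℝ := fun i => (fun x => c i * (x - b i)) ∘ Y i with hZdef
      have hZmeas : ∀ i, Measurable (Z i) := fun i =>
        ((measurable_id.sub_const (b i)).const_mul (c i)).comp (hYmeas i)
      have hZindep : ProbabilityTheory.iIndepFun Z P :=
        hYindep.comp (fun i => fun x => c i * (x - b i))
          (fun i => (measurable_id.sub_const (b i)).const_mul (c i))
      have hci : ∀ i, |c i| * 𝔫 i ≤ 2 * lam₁ := by
        intro i
        have e : c i * 𝔫 i = 2 * (lam * ((γ ⬝ᵥ Ψ i) * 𝔫 i / Real.sqrt q)) := by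
          rw [hcdef]
          simp only [div_eq_mul_inv]
          ring
        have h2 : |c i| * 𝔫 i = |c i * 𝔫 i| := by
          rw [abs_mul, abs_of_pos (h𝔫 i)]
        rw [h2, e, abs_mul, abs_two]
        have := hcb i γ hγ
        linarith
      have haux : ∀ i, Integrable (fun ω => Real.exp (c i * (Y i ω - b i))) P ∧
          ∫ ω, Real.exp (c i * (Y i ω - b i)) ∂P ≤ Real.exp (c i ^ 2 * 𝔫 i ^ 2 / 2) :=
        fun i => aux_exp P (fun ω => Y i ω - b i) ((hYmeas i).sub_const (b i))
          (𝔫 i) (h𝔫 i) lam₁ (hexp i) (c i) (hci i)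
      have hZint : ∀ i, Integrable (fun ω => Real.exp (1 * Z i ω)) P := by
        intro i
        simpa [hZdef, one_mul] using (haux i).1
      have hsumint : Integrable (fun ω => Real.exp (1 * (∑ i, Z i) ω)) P :=
        ProbabilityTheory.iIndepFun.integrable_exp_mul_sum hZindep hZmeas
          (fun i _ => hZint i)
      -- the integral bound via mgf
      have hmgf : ProbabilityTheory.mgf (∑ i, Z i) P 1
          = ∏ i, ProbabilityTheory.mgf (Z i) P 1 :=
        ProbabilityTheory.iIndepFun.mgf_sum hZindep hZmeas Finset.univ
      have hprodle : ∏ i, ProbabilityTheory.mgf (Z i) P 1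
          ≤ ∏ i, Real.exp (c i ^ 2 * 𝔫 i ^ 2 / 2) := by
        refine Finset.prod_le_prod (fun i _ => ?_) (fun i _ => ?_)
        · exact integral_nonneg fun ω => (Real.exp_pos _).le
        · have hZeq : (fun ω => Real.exp (1 * Z i ω))
              = fun ω => Real.exp (c i * (Y i ω - b i)) := by
            funext ω
            rw [hZdef]
            simp
          unfold ProbabilityTheory.mgf
          rw [hZeq]
          exact (haux i).2
      have hprodeq : ∏ i, Real.exp (c i ^ 2 * 𝔫 i ^ 2 / 2) = Real.exp (2 * lam ^ 2) := by
        rw [← Real.exp_sum]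
        congr 1
        have hsq : Real.sqrt q ^ 2 = q := Real.sq_sqrt hqnn
        calc ∑ i, c i ^ 2 * 𝔫 i ^ 2 / 2
            = ∑ i, (2 * lam ^ 2 / q) * ((𝔫 i) ^ 2 * (γ ⬝ᵥ Ψ i) ^ 2) := by
              refine Finset.sum_congr rfl fun i _ => ?_
              rw [hcdef]
              rw [div_pow, hsq]
              field_simp
          _ = (2 * lam ^ 2 / q) * ∑ i, (𝔫 i) ^ 2 * (γ ⬝ᵥ Ψ i) ^ 2 :=
              (Finset.mul_sum _ _ _).symm
          _ = 2 * lam ^ 2 := by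
              rw [← hq1]
              field_simp
      have hintle : ∫ ω, Real.exp (1 * (∑ i, Z i) ω) ∂P ≤ Real.exp (2 * lam ^ 2) := by
        have : ∫ ω, Real.exp (1 * (∑ i, Z i) ω) ∂P
            = ProbabilityTheory.mgf (∑ i, Z i) P 1 := rfl
        rw [this, hmgf]
        exact hprodle.trans (le_of_eq hprodeq)
      -- pointwise identity between the exponent in the goal and `∑ Z`
      have hptw : ∀ ω, 2 * lam * (μ * ∑ i, (Y i ω - b i) * (γ ⬝ᵥ Ψ i)) /
          Real.sqrt (qf (μ ^ 2 • ∑ j, (𝔫 j) ^ 2 • vecMulVec (Ψ j) (Ψ j)) γ)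
          = 1 * (∑ i, Z i) ω := by
        intro ω
        rw [hden, one_mul]
        have hrhs : (∑ i, Z i) ω
            = (∑ i, 2 * lam * ((Y i ω - b i) * (γ ⬝ᵥ Ψ i))) / Real.sqrt q := by
          rw [Finset.sum_div]
          simp only [hZdef, hcdef, Finset.sum_apply, Function.comp_apply]
          refine Finset.sum_congr rfl fun i _ => ?_
          simp only [div_eq_mul_inv]
          ring
        rw [hrhs, div_eq_div_iff (mul_ne_zero hμ.ne' hsqpos.ne') hsqpos.ne',
          ← Finset.mul_sum]
        ring
      calc ∫⁻ ω, ENNReal.ofReal (Real.exp (2 * lam *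
              (μ * ∑ i, (Y i ω - b i) * (γ ⬝ᵥ Ψ i)) /
              Real.sqrt (qf (μ ^ 2 • ∑ j, (𝔫 j) ^ 2 • vecMulVec (Ψ j) (Ψ j)) γ))) ∂P
          = ∫⁻ ω, ENNReal.ofReal (Real.exp (1 * (∑ i, Z i) ω)) ∂P := by
            refine lintegral_congr fun ω => ?_
            rw [hptw ω]
        _ = ENNReal.ofReal (∫ ω, Real.exp (1 * (∑ i, Z i) ω) ∂P) :=
            (ofReal_integral_eq_lintegral_ofReal hsumint
              (Filter.Eventually.of_forall fun ω => (Real.exp_pos _).le)).symm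
        _ ≤ ENNReal.ofReal (Real.exp (2 * lam ^ 2)) := ENNReal.ofReal_le_ofReal hintle

end
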